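/- For every real γ > 0, the sequence N ↦ ((⌊γ·N⌋ : ℝ) − 1)/((⌊γ·N⌋ : ℝ) + N − 1) (indexed by natural numbers N) converges to γ/(γ + 1) as N → ∞. Consequently, the price of fairness of the chain construction in Theorem 7 (weighted fairness with no chain cap, a chain of N highly-sensitized patients versus a chain of ⌊(γ+1)N⌋ − 1 lowly-sensitized patients) is at least γ/(γ + 1). -/

import Mathlib

open Filter Topology

/-- The price-of-fairness sequence of the chain construction in Theorem 7
converges to `γ/(γ+1)`; consequently the price of fairness of the weighted
fairness rule with no chain cap is at least `γ/(γ+1)` (values of the sequence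
come arbitrarily close to, i.e. within any `ε` of, `γ/(γ+1)`). -/
theorem weighted_fairness_chain_pof (γ : ℝ) (hγ : 0 < γ) :
    Filter.Tendsto
      (fun N : ℕ => ((⌊γ * N⌋ : ℝ) - 1) / ((⌊γ * N⌋ : ℝ) + N - 1))
      Filter.atTop (nhds (γ / (γ + 1))) ∧
    ∀ ε > (0 : ℝ), ∃ N : ℕ,
      ((⌊γ * N⌋ : ℝ) - 1) / ((⌊γ * N⌋ : ℝ) + N - 1) > γ / (γ + 1) - ε := by
  have h0 : Tendsto (fun N : ℕ => (1 : ℝ) / N) atTop (nhds 0) :=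
    tendsto_one_div_atTop_nhds_zero_nat
  have h1 : Tendsto (fun N : ℕ => (⌊γ * N⌋ : ℝ) / N) atTop (nhds γ) := by
    apply tendsto_of_tendsto_of_tendsto_of_le_of_le'
      (g := fun N : ℕ => γ - 1 / N) (h := fun _ : ℕ => γ)
    · simpa using tendsto_const_nhds.sub h0
    · exact tendsto_const_nhds
    · filter_upwards [eventually_ge_atTop 1] with N hN
      have hNpos : (0 : ℝ) < N := by exact_mod_cast hN
      rw [sub_le_iff_le_add, ← add_div, le_div_iff₀ hNpos]
      have := Int.lt_floor_add_one (γ * N)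
      linarith
    · filter_upwards [eventually_ge_atTop 1] with N hN
      have hNpos : (0 : ℝ) < N := by exact_mod_cast hN
      rw [div_le_iff₀ hNpos]
      exact Int.floor_le (γ * N)
  have hden : γ + 1 - 0 ≠ 0 := by linarith
  have hlim : Tendsto (fun N : ℕ => ((⌊γ * N⌋ : ℝ) - 1) / ((⌊γ * N⌋ : ℝ) + N - 1))
      atTop (nhds (γ / (γ + 1))) := by
    have := Tendsto.div (h1.sub h0) ((h1.add tendsto_const_nhds).sub h0) hden
    simp only [sub_zero] at this
    apply this.congr'
    filter_upwards [eventually_ge_atTop 1] with N hN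
    have hNpos : (0 : ℝ) < N := by exact_mod_cast hN
    simp only [Pi.div_apply]
    field_simp
  refine ⟨hlim, fun ε hε => ?_⟩
  have := hlim.eventually (eventually_gt_nhds (by linarith : γ / (γ + 1) - ε < γ / (γ + 1)))
  obtain ⟨N, hN⟩ := this.exists
  exact ⟨N, hN⟩
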